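/- Let H be a normed real vector space and let B, P̂ : H → H be continuous linear operators with ‖B v‖ ≤ ‖v‖ and ‖v − P̂ v‖ ≤ γ ‖v‖ for all v ∈ H. Given v⁽⁰⁾ ∈ H, define the exact iterates v⁽ᵏ⁾ := B^k v⁽⁰⁾ and the inexact iterates ṽ⁽⁰⁾ := v⁽⁰⁾, ṽ⁽ᵏ⁾ := ṽ⁽ᵏ⁻¹⁾ + P̂ (B ṽ⁽ᵏ⁻¹⁾ − ṽ⁽ᵏ⁻¹⁾). Then for every k ∈ ℕ: ‖v⁽ᵏ⁾ − ṽ⁽ᵏ⁾‖ ≤ 2γ ‖v⁽⁰⁾‖ · Σ_{ν=0}^{k−1} (1 + 2γ)^ν. (Key error-propagation estimate in the proof of Theorem 4.3 of the paper.) -/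
import Mathlib


open scoped BigOperators

/-- key error-propagation estimate in the proof of Theorem 4.3 of the
paper: for continuous linear operators `B, P̂` on a normed real vector space with
`‖B v‖ ≤ ‖v‖` and `‖v - P̂ v‖ ≤ γ ‖v‖`, the exact iterates `v⁽ᵏ⁾ = B^k v⁽⁰⁾` and the
inexact iterates `ṽ⁽⁰⁾ = v⁽⁰⁾`, `ṽ⁽ᵏ⁾ = ṽ⁽ᵏ⁻¹⁾ + P̂(B ṽ⁽ᵏ⁻¹⁾ - ṽ⁽ᵏ⁻¹⁾)` satisfy
`‖v⁽ᵏ⁾ - ṽ⁽ᵏ⁾‖ ≤ 2γ ‖v⁽⁰⁾‖ Σ_{ν=0}^{k-1} (1 + 2γ)^ν`. -/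
theorem statement11 {H : Type*} [NormedAddCommGroup H] [NormedSpace ℝ H]
    (B Phat : H →L[ℝ] H) (γ : ℝ)
    (hB : ∀ v : H, ‖B v‖ ≤ ‖v‖)
    (hP : ∀ v : H, ‖v - Phat v‖ ≤ γ * ‖v‖)
    (v0 : H) (tv : ℕ → H) (h0 : tv 0 = v0)
    (hrec : ∀ k : ℕ, tv (k + 1) = tv k + Phat (B (tv k) - tv k)) :
    ∀ k : ℕ, ‖(B ^ k) v0 - tv k‖ ≤
      2 * γ * ‖v0‖ * ∑ ν ∈ Finset.range k, (1 + 2 * γ) ^ ν := by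
  by_cases htriv : ∀ v : H, v = 0
  · intro k
    rw [htriv ((B ^ k) v0), htriv (tv k), htriv v0]
    simp
  push_neg at htriv
  obtain ⟨v, hv⟩ := htriv
  have hvpos : 0 < ‖v‖ := norm_pos_iff.mpr hv
  have hγ : 0 ≤ γ := by nlinarith [norm_nonneg (v - Phat v), hP v]
  have hpow : ∀ k, ‖(B ^ k) v0‖ ≤ ‖v0‖ := by
    intro k
    induction k with
    | zero => simp
    | succ n ih =>
      rw [pow_succ', ContinuousLinearMap.mul_apply]
      exact le_trans (hB _) ih
  intro k
  induction k with
  | zero => simp [h0]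
  | succ n ih =>
    set vk := (B ^ n) v0 with hvk
    have hSnn : (0:ℝ) ≤ ∑ ν ∈ Finset.range n, (1 + 2 * γ) ^ ν :=
      Finset.sum_nonneg fun i _ => pow_nonneg (by linarith) i
    have hstep : (B ^ (n+1)) v0 - tv (n+1)
        = B (vk - tv n) + ((B (tv n) - tv n) - Phat (B (tv n) - tv n)) := by
      rw [hrec, pow_succ', ContinuousLinearMap.mul_apply]
      simp only [map_sub]
      abel
    have hw : ‖B (tv n) - tv n‖ ≤ 2 * ‖vk - tv n‖ + 2 * ‖v0‖ := by
      have hsplit : B (tv n) - tv n = (B (tv n) - B vk) + (B vk - vk) + (vk - tv n) := by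
        abel
      have hb1 : ‖B (tv n) - B vk‖ ≤ ‖vk - tv n‖ := by
        rw [← map_sub]
        calc ‖B (tv n - vk)‖ ≤ ‖tv n - vk‖ := hB _
          _ = ‖vk - tv n‖ := norm_sub_rev _ _
      have hb2 : ‖B vk - vk‖ ≤ 2 * ‖v0‖ := by
        have := hB vk
        have := hpow n
        have := norm_sub_le (B vk) vk
        linarith
      calc ‖B (tv n) - tv n‖
          = ‖(B (tv n) - B vk) + (B vk - vk) + (vk - tv n)‖ := by rw [← hsplit]
        _ ≤ ‖(B (tv n) - B vk) + (B vk - vk)‖ + ‖vk - tv n‖ := norm_add_le _ _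
        _ ≤ ‖B (tv n) - B vk‖ + ‖B vk - vk‖ + ‖vk - tv n‖ := by
            linarith [norm_add_le (B (tv n) - B vk) (B vk - vk)]
        _ ≤ 2 * ‖vk - tv n‖ + 2 * ‖v0‖ := by linarith
    have hkey : ‖(B ^ (n+1)) v0 - tv (n+1)‖ ≤ (1 + 2 * γ) * ‖vk - tv n‖ + 2 * γ * ‖v0‖ := by
      rw [hstep]
      have h1 : ‖B (vk - tv n)‖ ≤ ‖vk - tv n‖ := hB _
      have h2 : ‖(B (tv n) - tv n) - Phat (B (tv n) - tv n)‖ ≤ γ * ‖B (tv n) - tv n‖ := hP _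
      have h3 : γ * ‖B (tv n) - tv n‖ ≤ γ * (2 * ‖vk - tv n‖ + 2 * ‖v0‖) :=
        mul_le_mul_of_nonneg_left hw hγ
      calc ‖_ + _‖ ≤ ‖B (vk - tv n)‖ + ‖(B (tv n) - tv n) - Phat (B (tv n) - tv n)‖ :=
            norm_add_le _ _
        _ ≤ (1 + 2 * γ) * ‖vk - tv n‖ + 2 * γ * ‖v0‖ := by nlinarith
    have hsum : ∑ ν ∈ Finset.range (n+1), (1 + 2 * γ) ^ ν
        = (1 + 2 * γ) * ∑ ν ∈ Finset.range n, (1 + 2 * γ) ^ ν + 1 := geom_sum_succ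
    rw [hsum]
    have hv0 : (0:ℝ) ≤ ‖v0‖ := norm_nonneg _
    nlinarith [ih, hkey, norm_nonneg (vk - tv n)]
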